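/- arXiv:0802.3938 — 3 statements merged into one kernel-verified Lean document; each statement's English description precedes it below -/
import Mathlib

section
/- For every commutative ring R and every R-module M, the R-module map Φ : (M ⊗_R R[X]) ⊕ (M ⊗_R R[Y]) → M ⊗_R R[t,t⁻¹] defined by Φ(a, b) = α(a) − t⁻²·β(b) (where t⁻²· denotes multiplication by the element t⁻² of R[t,t⁻¹] on M ⊗_R R[t,t⁻¹]) is injective, and the map M → coker Φ sending m to the class of m ⊗ t⁻¹ is an isomorphism of R-modules. -/
open TensorProduct Polynomial LaurentPolynomial

noncomputable section

variable (R : Type*) [CommRing R] (M : Type*) [AddCommGroup M] [Module R M]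

/-- `α : M ⊗[R] R[X] → M ⊗[R] R[t,t⁻¹]`, induced by the `R`-algebra map `X ↦ t`. -/
noncomputable def inducedByXToT : M ⊗[R] R[X] →ₗ[R] M ⊗[R] R[T;T⁻¹] :=
  LinearMap.lTensor M (Polynomial.toLaurentAlg : R[X] →ₐ[R] R[T;T⁻¹]).toLinearMap

/-- `β : M ⊗[R] R[Y] → M ⊗[R] R[t,t⁻¹]`, induced by the `R`-algebra map `Y ↦ t⁻¹`. -/
noncomputable def inducedByYToTinv : M ⊗[R] R[X] →ₗ[R] M ⊗[R] R[T;T⁻¹] :=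
  LinearMap.lTensor M (Polynomial.aeval (T (-1) : R[T;T⁻¹]) : R[X] →ₐ[R] R[T;T⁻¹]).toLinearMap

/-- Multiplication by `t⁻²` on `M ⊗[R] R[t,t⁻¹]`. -/
noncomputable def mulTinvSq : M ⊗[R] R[T;T⁻¹] →ₗ[R] M ⊗[R] R[T;T⁻¹] :=
  LinearMap.lTensor M (LinearMap.mulLeft R (T (-2) : R[T;T⁻¹]))

/-- The map `Φ(a, b) = α(a) − t⁻²·β(b)`. -/
noncomputable def PhiMap : (M ⊗[R] R[X]) × (M ⊗[R] R[X]) →ₗ[R] M ⊗[R] R[T;T⁻¹] :=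
  inducedByXToT R M ∘ₗ LinearMap.fst R _ _ -
    mulTinvSq R M ∘ₗ inducedByYToTinv R M ∘ₗ LinearMap.snd R _ _

/-- The map `M → coker Φ`, `m ↦ [m ⊗ t⁻¹]`. -/
noncomputable def toCokerPhi : M →ₗ[R] (M ⊗[R] R[T;T⁻¹]) ⧸ LinearMap.range (PhiMap R M) :=
  (LinearMap.range (PhiMap R M)).mkQ ∘ₗ
    (TensorProduct.mk R M R[T;T⁻¹]).flip (T (-1))

/-! ### Auxiliary definitions -/

/-- Identify `M ⊗[R] R[T;T⁻¹]` with `ℤ →₀ M`. -/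
noncomputable def eqE : M ⊗[R] R[T;T⁻¹] ≃ₗ[R] (ℤ →₀ M) :=
  (LinearEquiv.lTensor M (AddMonoidAlgebra.coeffLinearEquiv R)).trans
    (TensorProduct.finsuppScalarRight R R M ℤ)

/-- Identify `M ⊗[R] R[X]` with `ℕ →₀ M`. -/
noncomputable def eqG : M ⊗[R] R[X] ≃ₗ[R] (ℕ →₀ M) :=
  (LinearEquiv.lTensor M ((Polynomial.toFinsuppIsoAlg R).toLinearEquiv.trans
    (AddMonoidAlgebra.coeffLinearEquiv R))).trans
    (TensorProduct.finsuppScalarRight R R M ℕ)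

noncomputable def mapA : (ℕ →₀ M) →ₗ[R] (ℤ →₀ M) :=
  Finsupp.lmapDomain M R (Nat.cast : ℕ → ℤ)

noncomputable def mapB : (ℕ →₀ M) →ₗ[R] (ℤ →₀ M) :=
  Finsupp.lmapDomain M R (fun n : ℕ => (-2 : ℤ) - n)

noncomputable def PsiMap : (ℕ →₀ M) × (ℕ →₀ M) →ₗ[R] (ℤ →₀ M) :=
  mapA R M ∘ₗ LinearMap.fst R _ _ - mapB R M ∘ₗ LinearMap.snd R _ _

lemma scalarRight_single {ι : Type*} [DecidableEq ι] (m : M) (k : ι) (r : R) :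
    TensorProduct.finsuppScalarRight R R M ι (m ⊗ₜ Finsupp.single k r) =
      Finsupp.single k (r • m) := by
  ext i
  rw [TensorProduct.finsuppScalarRight_apply_tmul_apply]
  simp [Finsupp.single_apply, ite_smul]

lemma eqE_tmul_single (m : M) (k : ℤ) (r : R) :
    eqE R M (m ⊗ₜ (AddMonoidAlgebra.single k r : R[T;T⁻¹])) = Finsupp.single k (r • m) :=
  scalarRight_single R M m k r

lemma eqG_tmul_monomial (m : M) (n : ℕ) (r : R) :
    eqG R M (m ⊗ₜ monomial n r) = Finsupp.single n (r • m) := by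
  rw [eqG, LinearEquiv.trans_apply]
  have h1 : (LinearEquiv.lTensor M ((Polynomial.toFinsuppIsoAlg R).toLinearEquiv.trans
    (AddMonoidAlgebra.coeffLinearEquiv R)))
      (m ⊗ₜ monomial n r) = m ⊗ₜ (Finsupp.single n r : ℕ →₀ R) := by
    rw [LinearEquiv.lTensor, TensorProduct.congr_tmul]
    rfl
  rw [h1]
  exact scalarRight_single R M m n r

lemma key1 : (eqE R M).toLinearMap ∘ₗ inducedByXToT R M
    = mapA R M ∘ₗ (eqG R M).toLinearMap := by
  apply TensorProduct.ext'
  intro m p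
  induction p using Polynomial.induction_on' with
  | add p q hp hq =>
      simp only [tmul_add, map_add] at *
      rw [hp, hq]
  | monomial n r =>
      simp only [LinearMap.comp_apply, LinearEquiv.coe_coe]
      have h1 : inducedByXToT R M (m ⊗ₜ monomial n r)
          = m ⊗ₜ (AddMonoidAlgebra.single (n : ℤ) r : R[T;T⁻¹]) := by
        rw [inducedByXToT, LinearMap.lTensor_tmul]
        congr 1
        show toLaurentAlg (monomial n r) = _
        rw [Polynomial.toLaurentAlg_apply, Polynomial.toLaurent_C_mul_T,
          ← single_eq_C_mul_T]
      rw [h1, eqE_tmul_single, eqG_tmul_monomial, mapA, Finsupp.lmapDomain_apply,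
        Finsupp.mapDomain_single]

lemma key2 : (eqE R M).toLinearMap ∘ₗ (mulTinvSq R M ∘ₗ inducedByYToTinv R M)
    = mapB R M ∘ₗ (eqG R M).toLinearMap := by
  apply TensorProduct.ext'
  intro m p
  induction p using Polynomial.induction_on' with
  | add p q hp hq =>
      simp only [tmul_add, map_add] at *
      rw [hp, hq]
  | monomial n r =>
      simp only [LinearMap.comp_apply, LinearEquiv.coe_coe]
      have h1 : mulTinvSq R M (inducedByYToTinv R M (m ⊗ₜ monomial n r))
          = m ⊗ₜ (AddMonoidAlgebra.single ((-2 : ℤ) - n) r : R[T;T⁻¹]) := by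
        rw [inducedByYToTinv, LinearMap.lTensor_tmul, mulTinvSq, LinearMap.lTensor_tmul]
        congr 1
        show T (-2) * ((aeval (T (-1) : R[T;T⁻¹])) (monomial n r)) = _
        rw [aeval_monomial, T_pow, ← LaurentPolynomial.C_eq_algebraMap, single_eq_C_mul_T]
        rw [mul_left_comm, ← T_add]
        congr 2
        ring
      rw [h1, eqE_tmul_single, eqG_tmul_monomial, mapB, Finsupp.lmapDomain_apply,
        Finsupp.mapDomain_single]

lemma keyfun (x : (M ⊗[R] R[X]) × (M ⊗[R] R[X])) :
    eqE R M (PhiMap R M x) = PsiMap R M (eqG R M x.1, eqG R M x.2) := by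
  have e1 := LinearMap.congr_fun (key1 R M) x.1
  have e2 := LinearMap.congr_fun (key2 R M) x.2
  simp only [LinearMap.comp_apply, LinearEquiv.coe_coe] at e1 e2
  have hΦ : PhiMap R M x
      = inducedByXToT R M x.1 - mulTinvSq R M (inducedByYToTinv R M x.2) := rfl
  have hΨ : PsiMap R M (eqG R M x.1, eqG R M x.2)
      = mapA R M (eqG R M x.1) - mapB R M (eqG R M x.2) := rfl
  rw [hΦ, map_sub, e1, e2, hΨ]

lemma castm2_inj : Function.Injective (fun n : ℕ => (-2 : ℤ) - n) := by
  intro a b h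
  simp only at h
  omega

lemma psi_inj : Function.Injective (PsiMap R M) := by
  rw [injective_iff_map_eq_zero]
  rintro ⟨f, g⟩ h
  have h' : mapA R M f = mapB R M g := by
    have : mapA R M f - mapB R M g = 0 := h
    rwa [sub_eq_zero] at this
  have hf : f = 0 := by
    ext n
    have hv := DFunLike.congr_fun h' (n : ℤ)
    rw [mapA, Finsupp.lmapDomain_apply, Finsupp.mapDomain_apply Nat.cast_injective,
      mapB, Finsupp.lmapDomain_apply, Finsupp.mapDomain_notin_range] at hv
    · simpa using hv
    · rintro ⟨k, hk⟩
      simp only at hk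
      omega
  have hg : g = 0 := by
    apply Finsupp.mapDomain_injective castm2_inj
    have : mapB R M g = 0 := by rw [← h', hf]; simp
    rw [mapB, Finsupp.lmapDomain_apply] at this
    simpa using this
  simp [hf, hg]

lemma psi_range :
    LinearMap.range (PsiMap R M)
      = LinearMap.ker (Finsupp.lapply (-1) : (ℤ →₀ M) →ₗ[R] M) := by
  apply le_antisymm
  · rintro _ ⟨⟨f, g⟩, rfl⟩
    rw [LinearMap.mem_ker, Finsupp.lapply_apply]
    have : PsiMap R M (f, g) = mapA R M f - mapB R M g := rfl
    rw [this, Finsupp.sub_apply, mapA, mapB, Finsupp.lmapDomain_apply,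
      Finsupp.lmapDomain_apply, Finsupp.mapDomain_notin_range,
      Finsupp.mapDomain_notin_range]
    · simp
    · rintro ⟨k, hk⟩
      simp only at hk
      omega
    · rintro ⟨k, hk⟩
      omega
  · intro F hF
    have hF1 : F (-1) = 0 := hF
    refine ⟨(Finsupp.comapDomain (Nat.cast : ℕ → ℤ) F Nat.cast_injective.injOn,
      -Finsupp.comapDomain (fun n : ℕ => (-2 : ℤ) - n) F castm2_inj.injOn), ?_⟩
    have hΨ : PsiMap R M (Finsupp.comapDomain (Nat.cast : ℕ → ℤ) F Nat.cast_injective.injOn,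
        -Finsupp.comapDomain (fun n : ℕ => (-2 : ℤ) - n) F castm2_inj.injOn)
        = mapA R M (Finsupp.comapDomain (Nat.cast : ℕ → ℤ) F Nat.cast_injective.injOn)
          + mapB R M (Finsupp.comapDomain (fun n : ℕ => (-2 : ℤ) - n) F
            castm2_inj.injOn) := by
      simp only [PsiMap, LinearMap.sub_apply, LinearMap.comp_apply,
        LinearMap.fst_apply, LinearMap.snd_apply, map_neg, sub_neg_eq_add]
    rw [hΨ]
    ext k
    rw [Finsupp.add_apply, mapA, mapB, Finsupp.lmapDomain_apply, Finsupp.lmapDomain_apply]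
    rcases le_or_gt 0 k with hk | hk
    · lift k to ℕ using hk
      rw [Finsupp.mapDomain_apply Nat.cast_injective, Finsupp.comapDomain_apply,
        Finsupp.mapDomain_notin_range]
      · simp
      · rintro ⟨j, hj⟩
        replace hj : (-2 : ℤ) - j = (k : ℤ) := hj
        omega
    · rcases eq_or_lt_of_le (by omega : k ≤ -1) with hk1 | hk1
      · rw [hk1, Finsupp.mapDomain_notin_range, Finsupp.mapDomain_notin_range]
        · rw [hF1]; simp
        · rintro ⟨j, hj⟩
          replace hj : (-2 : ℤ) - j = -1 := hj
          omega
        · rintro ⟨j, hj⟩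
          replace hj : ((j : ℤ)) = -1 := hj
          omega
      · have hk2 : k ≤ -2 := by omega
        have hn : ((-2 - k).toNat : ℤ) = -2 - k := Int.toNat_of_nonneg (by omega)
        have hkeq : k = (-2 : ℤ) - ((-2 - k).toNat : ℤ) := by omega
        rw [hkeq, Finsupp.mapDomain_notin_range, ← show (fun n : ℕ => (-2 : ℤ) - n)
          ((-2 - k).toNat) = (-2 : ℤ) - ((-2 - k).toNat : ℤ) from rfl,
          Finsupp.mapDomain_apply castm2_inj, Finsupp.comapDomain_apply]
        · simp
        · rintro ⟨j, hj⟩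
          replace hj : ((j : ℤ)) = -2 - ((-2 - k).toNat : ℤ) := hj
          omega

/-- `Φ` is injective, and `m ↦ [m ⊗ t⁻¹] : M → coker Φ` is an isomorphism of `R`-modules. -/
theorem bass_sigma_component :
    Function.Injective (PhiMap R M) ∧ Function.Bijective (toCokerPhi R M) := by
  have inj : Function.Injective (PhiMap R M) := by
    intro x y h
    have h1 : PsiMap R M (eqG R M x.1, eqG R M x.2)
        = PsiMap R M (eqG R M y.1, eqG R M y.2) := by
      rw [← keyfun, ← keyfun, h]
    have h2 := psi_inj R M h1
    exact Prod.ext ((eqG R M).injective (congrArg Prod.fst h2))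
      ((eqG R M).injective (congrArg Prod.snd h2))
  refine ⟨inj, ?_⟩
  have hmap : Submodule.map ((eqE R M : M ⊗[R] R[T;T⁻¹] →ₗ[R] (ℤ →₀ M)))
      (LinearMap.range (PhiMap R M))
      = LinearMap.ker (Finsupp.lapply (-1) : (ℤ →₀ M) →ₗ[R] M) := by
    rw [← psi_range R M]
    apply le_antisymm
    · rintro _ ⟨_, ⟨x, rfl⟩, rfl⟩
      exact ⟨(eqG R M x.1, eqG R M x.2), (keyfun R M x).symm⟩
    · rintro _ ⟨⟨a, b⟩, rfl⟩
      refine ⟨PhiMap R M ((eqG R M).symm a, (eqG R M).symm b), ⟨_, rfl⟩, ?_⟩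
      have hk := keyfun R M ((eqG R M).symm a, (eqG R M).symm b)
      simp only [LinearEquiv.apply_symm_apply] at hk
      exact hk
  let τ := Submodule.Quotient.equiv (LinearMap.range (PhiMap R M))
    (LinearMap.ker (Finsupp.lapply (-1) : (ℤ →₀ M) →ₗ[R] M)) (eqE R M) hmap
  let κ : ((ℤ →₀ M) ⧸ LinearMap.ker (Finsupp.lapply (-1) : (ℤ →₀ M) →ₗ[R] M)) →ₗ[R] M :=
    Submodule.liftQ _ (Finsupp.lapply (-1)) le_rfl
  have hκinj : Function.Injective κ := by
    rw [← LinearMap.ker_eq_bot]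
    exact Submodule.ker_liftQ_eq_bot _ _ _ le_rfl
  have hκsurj : Function.Surjective κ := by
    rw [← LinearMap.range_eq_top, Submodule.range_liftQ, LinearMap.range_eq_top]
    intro m
    exact ⟨Finsupp.single (-1) m, by simp⟩
  let κe := LinearEquiv.ofBijective κ ⟨hκinj, hκsurj⟩
  let total := τ ≪≫ₗ κe
  have htot : ∀ m : M, total (toCokerPhi R M m) = m := by
    intro m
    have h0 : toCokerPhi R M m = Submodule.Quotient.mk (m ⊗ₜ (T (-1) : R[T;T⁻¹])) := rfl
    have hτ : τ (Submodule.Quotient.mk (m ⊗ₜ (T (-1) : R[T;T⁻¹])))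
        = Submodule.Quotient.mk (eqE R M (m ⊗ₜ (T (-1) : R[T;T⁻¹]))) := by
      simp [τ, Submodule.Quotient.equiv, Submodule.mapQ_apply]
    have hE : eqE R M (m ⊗ₜ (T (-1) : R[T;T⁻¹])) = Finsupp.single (-1 : ℤ) m := by
      rw [show (T (-1) : R[T;T⁻¹]) = AddMonoidAlgebra.single (-1 : ℤ) (1 : R) from rfl,
        eqE_tmul_single, one_smul]
    show κe (τ (toCokerPhi R M m)) = m
    rw [h0, hτ, hE]
    show κ (Submodule.Quotient.mk (Finsupp.single (-1 : ℤ) m)) = m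
    rw [Submodule.liftQ_apply, Finsupp.lapply_apply, Finsupp.single_eq_same]
  have hfun : ⇑(toCokerPhi R M) = ⇑total.symm := by
    funext m
    apply total.injective
    rw [htot m, LinearEquiv.apply_symm_apply]
  rw [hfun]
  exact total.symm.bijective

end
end

section
/- For every commutative ring R, let S′ denote the monoid algebra of ℤ × ℤ over R (equivalently, the Laurent polynomial ring R[x^{±1}, y^{±1}], where x and y are the basis elements corresponding to (1,0) and (0,1)), and let μ′ : S′ → R[t,t⁻¹] be the R-algebra homomorphism induced by the addition homomorphism ℤ × ℤ → ℤ (so μ′(x) = μ′(y) = t). Then the sequence of S′-modules 0 → S′ → S′ → R[t,t⁻¹] → 0 is exact, where the first map is multiplication by x − y and the second is μ′. Equivalently: μ′ is surjective, its kernel is the principal ideal generated by x − y, and x − y is not a zero divisor in S′. -/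
open LaurentPolynomial

noncomputable section

variable (R : Type*) [CommRing R]

/-- `x = single (1,0) 1` in `S′ = R[x^{±1}, y^{±1}]`, the monoid algebra of `ℤ × ℤ` over `R`. -/
noncomputable def xVar : AddMonoidAlgebra R (ℤ × ℤ) := AddMonoidAlgebra.single ((1 : ℤ), (0 : ℤ)) 1

/-- `y = single (0,1) 1` in `S′ = R[x^{±1}, y^{±1}]`, the monoid algebra of `ℤ × ℤ` over `R`. -/
noncomputable def yVar : AddMonoidAlgebra R (ℤ × ℤ) := AddMonoidAlgebra.single ((0 : ℤ), (1 : ℤ)) 1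

/-- `μ′ : S′ → R[t,t⁻¹]`, the `R`-algebra homomorphism induced by the addition homomorphism
`ℤ × ℤ →+ ℤ` (so `μ′(x) = μ′(y) = t`). -/
noncomputable def muLaurent : AddMonoidAlgebra R (ℤ × ℤ) →ₐ[R] R[T;T⁻¹] :=
  AddMonoidAlgebra.mapDomainAlgHom R R (AddMonoidHom.fst ℤ ℤ + AddMonoidHom.snd ℤ ℤ)

lemma mu_single (a b : ℤ) (r : R) :
    muLaurent R (AddMonoidAlgebra.single (a,b) r) = AddMonoidAlgebra.single (a+b) r := by
  simp [muLaurent]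

lemma key_mul (a b : ℤ) (r : R) :
    (AddMonoidAlgebra.single (a,b) r) * (yVar R - xVar R)
      = AddMonoidAlgebra.single (a, b+1) r - AddMonoidAlgebra.single (a+1, b) r := by
  simp [yVar, xVar, mul_sub, AddMonoidAlgebra.single_mul_single, Prod.mk_add_mk]

lemma key_mem (b a : ℤ) (r : R) :
    (AddMonoidAlgebra.single (a,b) r : AddMonoidAlgebra R (ℤ×ℤ))
      - AddMonoidAlgebra.single (a+b, 0) r ∈ Ideal.span {xVar R - yVar R} := by
  set I := Ideal.span {xVar R - yVar R} with hI
  have hd : ∀ a b (r : R), (AddMonoidAlgebra.single (a, b+1) r : AddMonoidAlgebra R (ℤ×ℤ))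
      - AddMonoidAlgebra.single (a+1, b) r ∈ I := by
    intro a b r
    rw [← key_mul]
    exact Ideal.mul_mem_left _ _ (by
      rw [show yVar R - xVar R = -(xVar R - yVar R) by ring]
      exact I.neg_mem (Ideal.subset_span rfl))
  induction b using Int.induction_on generalizing a r with
  | zero => simpa using I.zero_mem
  | succ b ih =>
      have h1 := hd a (b:ℤ) r
      have h2 := ih (a+1) r
      have h3 := I.add_mem h1 h2
      rw [sub_add_sub_cancel] at h3
      rwa [show a + ((b:ℤ)+1) = (a+1) + b by ring]
  | pred b ih =>
      have h1 := hd (a-1) (-(b:ℤ)-1) r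
      have h2 := ih (a-1) r
      rw [show (-(b:ℤ)-1)+1 = -b by ring, show (a:ℤ)-1+1 = a by ring] at h1
      have h3 := I.sub_mem h2 h1
      rw [sub_sub_sub_cancel_left] at h3
      rw [show a + (-(b:ℤ)-1) = (a-1) + -(b:ℤ) by ring]
      exact h3

noncomputable def nuMap : AddMonoidAlgebra R (ℤ × ℤ) →ₐ[R] AddMonoidAlgebra R (ℤ × ℤ) :=
  (AddMonoidAlgebra.mapDomainAlgHom R R (AddMonoidHom.inl ℤ ℤ)).comp (muLaurent R)

lemma nu_single (a b : ℤ) (r : R) :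
    nuMap R (AddMonoidAlgebra.single (a,b) r) = AddMonoidAlgebra.single (a+b, 0) r := by
  simp only [nuMap, AlgHom.comp_apply, mu_single,
    AddMonoidAlgebra.mapDomainAlgHom_apply, Finsupp.mapDomain_single, AddMonoidHom.inl_apply,
    AddMonoidAlgebra.mapDomain_single]

lemma nu_mem (p : AddMonoidAlgebra R (ℤ × ℤ)) :
    p - nuMap R p ∈ Ideal.span {xVar R - yVar R} := by
  induction p using AddMonoidAlgebra.induction_linear with
  | zero => simp
  | add f g hf hg =>
      have h3 := Ideal.add_mem _ hf hg
      rw [sub_add_sub_comm] at h3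
      rw [map_add]
      exact h3
  | single g r =>
      obtain ⟨a, b⟩ := g
      rw [nu_single]
      exact key_mem R b a r

/-- The sequence of `S′`-modules `0 → S′ → S′ → R[t,t⁻¹] → 0` is exact, where the first map is
multiplication by `x − y` and the second is `μ′`: that is, `μ′` is surjective, its kernel is
the principal ideal generated by `x − y`, and `x − y` is not a zero divisor in `S′`. -/
theorem resolution_of_laurent_ring_exact :
    Function.Surjective (muLaurent R) ∧
    RingHom.ker (muLaurent R : AddMonoidAlgebra R (ℤ × ℤ) →+* R[T;T⁻¹]) =
      Ideal.span {xVar R - yVar R} ∧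
    (xVar R - yVar R) ∈ nonZeroDivisors (AddMonoidAlgebra R (ℤ × ℤ)) := by
  classical
  refine ⟨?_, ?_, ?_⟩
  · -- surjectivity
    intro q
    refine ⟨AddMonoidAlgebra.mapDomain (fun n => (n, (0:ℤ))) q, ?_⟩
    apply AddMonoidAlgebra.coeff_injective
    show Finsupp.mapDomain _ (Finsupp.mapDomain (fun n => (n, (0:ℤ))) q.coeff) = q.coeff
    rw [← Finsupp.mapDomain_comp]
    convert Finsupp.mapDomain_id
    funext n
    simp [Function.comp]
  · -- kernel
    apply le_antisymm
    · intro p hp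
      have hp0 : muLaurent R p = 0 := hp
      have key := nu_mem R p
      have hnu : nuMap R p = 0 := by
        rw [nuMap, AlgHom.comp_apply, hp0, map_zero]
      rw [hnu] at key
      simpa using key
    · rw [Ideal.span_le]
      rintro _ rfl
      show muLaurent R (xVar R - yVar R) = 0
      rw [map_sub]
      rw [show xVar R = AddMonoidAlgebra.single ((1:ℤ),(0:ℤ)) (1:R) from rfl,
        show yVar R = AddMonoidAlgebra.single ((0:ℤ),(1:ℤ)) (1:R) from rfl,
        mu_single, mu_single]
      simp
  · -- nonzerodivisor
    rw [mem_nonZeroDivisors_iff_right]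
    intro p hp
    by_contra hne
    have hc : ∀ c : ℤ × ℤ, c + ((1:ℤ),(0:ℤ)) + -((0:ℤ),(1:ℤ)) = c + (1,-1) := by
      intro c
      cases c
      simp only [Prod.ext_iff, Prod.fst_add, Prod.snd_add, Prod.fst_sub, Prod.snd_sub,
          Prod.fst_neg, Prod.snd_neg]
      constructor <;> omega
    have heq : ∀ c : ℤ × ℤ, p.coeff c = p.coeff (c + (1,-1)) := by
      intro c
      have h0 : p * xVar R = p * yVar R := by
        have h : p * (xVar R - yVar R) = 0 := hp
        rw [mul_sub, sub_eq_zero] at h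
        exact h
      have h1 := congrArg (fun f : AddMonoidAlgebra R (ℤ×ℤ) => f.coeff (c + (1,0))) h0
      simp only [xVar, yVar] at h1
      rw [AddMonoidAlgebra.coeff_mul_single_apply, AddMonoidAlgebra.coeff_mul_single_apply] at h1
      rw [hc c, add_neg_cancel_right] at h1
      simpa using h1
    obtain ⟨g, hg⟩ := Finsupp.ne_iff.mp (mt AddMonoidAlgebra.coeff_eq_zero.mp hne)
    simp only [Finsupp.coe_zero, Pi.zero_apply] at hg
    have hmem : ∀ n : ℕ, g + n • ((1:ℤ),(-1:ℤ)) ∈ p.coeff.support := by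
      intro n
      rw [Finsupp.mem_support_iff]
      induction n with
      | zero => simpa using hg
      | succ n ih =>
          have h := heq (g + n • ((1:ℤ),(-1:ℤ)))
          rw [succ_nsmul, ← add_assoc, ← h]
          exact ih
    have hinj : Function.Injective (fun n : ℕ => g + n • ((1:ℤ),(-1:ℤ)))  := by
      intro m n h
      simp only [add_right_inj, Prod.smul_mk] at h
      have h2 := congrArg Prod.fst h
      simpa using h2
    have hinf : (↑p.coeff.support : Set (ℤ × ℤ)).Infinite :=
      Set.infinite_of_injective_forall_mem hinj (fun n => hmem n)
    exact hinf (p.coeff.support.finite_toSet)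


end
end

section
/- Let R be a commutative ring, S′ the monoid algebra of ℤ × ℤ over R (the Laurent polynomial ring R[x^{±1}, y^{±1}]), and regard R[t,t⁻¹] as an S′-module via the R-algebra homomorphism μ′ : S′ → R[t,t⁻¹] induced by addition ℤ × ℤ → ℤ (so x, y ↦ t). Then Tor_0^{S′}(R[t,t⁻¹], R[t,t⁻¹]) is isomorphic to R[t,t⁻¹], Tor_1^{S′}(R[t,t⁻¹], R[t,t⁻¹]) is isomorphic to R[t,t⁻¹] (both as S′-modules, S′ acting through μ′), and Tor_n^{S′}(R[t,t⁻¹], R[t,t⁻¹]) = 0 for every n ≥ 2. -/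
open CategoryTheory LaurentPolynomial

noncomputable section

variable (R : Type*) [CommRing R]

/-- `R[t,t⁻¹]` regarded as a module over `S′` via `μ′`. -/
noncomputable instance laurentModuleOverS' :
    Module (AddMonoidAlgebra R (ℤ × ℤ)) (LaurentPolynomial R) :=
  ((muLaurent R).toRingHom).toModule

/-- `R[t,t⁻¹]` as an object of the category of `S′`-modules (with `S′` acting via `μ′`). -/
noncomputable def laurentAsS'Mod : ModuleCat (AddMonoidAlgebra R (ℤ × ℤ)) :=
  ModuleCat.of (AddMonoidAlgebra R (ℤ × ℤ)) (LaurentPolynomial R)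


namespace TorLaurentRingAux

/-- The Koszul element `x - y` of `S′`. -/
def s : AddMonoidAlgebra R (ℤ × ℤ) :=
  AddMonoidAlgebra.single ((1:ℤ),(0:ℤ)) 1 - AddMonoidAlgebra.single ((0:ℤ),(1:ℤ)) 1

lemma mu_single (p : ℤ × ℤ) (c : R) :
    muLaurent R (AddMonoidAlgebra.single p c) = AddMonoidAlgebra.single (p.1 + p.2) c := by
  simp [muLaurent, AddMonoidAlgebra.mapDomainAlgHom, Finsupp.mapDomain_single]

lemma mu_s : muLaurent R (s R) = 0 := by
  simp [s, map_sub, mu_single]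

lemma mu_eq_mapDomain (f : AddMonoidAlgebra R (ℤ × ℤ)) :
    muLaurent R f = AddMonoidAlgebra.mapDomain (fun p : ℤ × ℤ => p.1 + p.2) f := by
  have h : ⇑(AddMonoidHom.fst ℤ ℤ + AddMonoidHom.snd ℤ ℤ) = fun p : ℤ × ℤ => p.1 + p.2 := by
    funext p; simp
  show AddMonoidAlgebra.mapDomain _ f = _
  rw [h]

lemma mu_surjective : Function.Surjective (muLaurent R) := by
  intro l
  refine ⟨AddMonoidAlgebra.mapDomain (fun k : ℤ => (k, (0:ℤ))) l, ?_⟩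
  rw [mu_eq_mapDomain]
  apply AddMonoidAlgebra.ext
  show Finsupp.mapDomain (fun p : ℤ × ℤ => p.1 + p.2) (Finsupp.mapDomain (fun k : ℤ => (k, (0:ℤ))) l.coeff) = l.coeff
  rw [← Finsupp.mapDomain_comp]
  have h : ((fun p : ℤ × ℤ => p.1 + p.2) ∘ (fun k : ℤ => (k, (0:ℤ)))) = id := by
    funext k; simp
  rw [h, Finsupp.mapDomain_id]

lemma eq_zero_of_s_mul_eq_zero (g : AddMonoidAlgebra R (ℤ × ℤ)) (h : s R * g = 0) : g = 0 := by
  have e : AddMonoidAlgebra.single ((1:ℤ),(0:ℤ)) (1:R) * g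
      = AddMonoidAlgebra.single ((0:ℤ),(1:ℤ)) (1:R) * g := by
    have := h
    rw [s, sub_mul, sub_eq_zero] at this
    exact this
  have key : ∀ p : ℤ × ℤ, g.coeff p = g.coeff (p.1 + 1, p.2 - 1) := by
    intro p
    have h2 := congrArg (fun f : AddMonoidAlgebra R (ℤ × ℤ) => f.coeff (p.1 + 1, p.2)) e
    simp only [AddMonoidAlgebra.coeff_single_mul_apply, one_mul, Prod.neg_mk,
      Prod.mk_add_mk] at h2
    norm_num at h2
    rw [h2]
    congr 1
    exact Prod.ext rfl (by ring)
  by_contra hg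
  obtain ⟨p, hp⟩ : ∃ p, g.coeff p ≠ 0 := by
    by_contra hc
    push_neg at hc
    exact hg (AddMonoidAlgebra.ext (Finsupp.ext hc))
  have hn : ∀ n : ℕ, g.coeff (p.1 + n, p.2 - n) ≠ 0 := by
    intro n
    induction n with
    | zero => simpa using hp
    | succ n ih =>
      have h3 := key (p.1 + n, p.2 - n)
      have e2 : ((p.1 + (n:ℤ)) + 1, (p.2 - (n:ℤ)) - 1) = (p.1 + ((n+1:ℕ):ℤ), p.2 - ((n+1:ℕ):ℤ)) := by
        push_cast
        exact Prod.ext (by ring) (by ring)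
      rw [e2] at h3
      rw [← h3]
      exact ih
  have hinf : (↑g.coeff.support : Set (ℤ × ℤ)).Infinite :=
    Set.infinite_of_injective_forall_mem
      (f := fun n : ℕ => ((p.1 + n : ℤ), (p.2 - n : ℤ)))
      (by
        intro a b hab
        have := congrArg Prod.fst hab
        simpa using this)
      (fun n => by simpa [Finsupp.mem_support_iff] using hn n)
  exact hinf g.coeff.support.finite_toSet

lemma s_dvd_nat (n : ℕ) :
    s R ∣ AddMonoidAlgebra.single ((n:ℤ), (0:ℤ)) (1:R) - AddMonoidAlgebra.single ((0:ℤ), (n:ℤ)) 1 := by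
  have h := sub_dvd_pow_sub_pow
    (AddMonoidAlgebra.single ((1:ℤ),(0:ℤ)) (1:R) : AddMonoidAlgebra R (ℤ × ℤ))
    (AddMonoidAlgebra.single ((0:ℤ),(1:ℤ)) 1) n
  simpa [s, AddMonoidAlgebra.single_pow, Prod.smul_mk, nsmul_eq_mul] using h

lemma s_dvd_int (b : ℤ) :
    s R ∣ AddMonoidAlgebra.single ((b:ℤ), (0:ℤ)) (1:R) - AddMonoidAlgebra.single ((0:ℤ), b) 1 := by
  obtain ⟨n, rfl | rfl⟩ := b.eq_nat_or_neg
  · exact s_dvd_nat R n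
  · have h := s_dvd_nat R n
    have e : AddMonoidAlgebra.single ((-(n:ℤ)), (0:ℤ)) (1:R) - AddMonoidAlgebra.single ((0:ℤ), -(n:ℤ)) 1
        = AddMonoidAlgebra.single ((-(n:ℤ)), (-(n:ℤ))) (1:R) *
          (AddMonoidAlgebra.single ((0:ℤ), (n:ℤ)) 1 - AddMonoidAlgebra.single ((n:ℤ), (0:ℤ)) 1) := by
      rw [mul_sub, AddMonoidAlgebra.single_mul_single, AddMonoidAlgebra.single_mul_single]
      norm_num
    rw [e]
    refine Dvd.dvd.mul_left ?_ _
    have := dvd_neg.mpr h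
    rwa [neg_sub] at this

lemma s_dvd_single (p : ℤ × ℤ) (c : R) :
    s R ∣ AddMonoidAlgebra.single p c - AddMonoidAlgebra.single (p.1 + p.2, (0:ℤ)) c := by
  have h := s_dvd_int R p.2
  have e : AddMonoidAlgebra.single p c - AddMonoidAlgebra.single (p.1 + p.2, (0:ℤ)) c
      = AddMonoidAlgebra.single ((p.1 : ℤ), (0:ℤ)) c *
        (AddMonoidAlgebra.single ((0:ℤ), p.2) 1 - AddMonoidAlgebra.single ((p.2:ℤ), (0:ℤ)) 1) := by
    rw [mul_sub, AddMonoidAlgebra.single_mul_single, AddMonoidAlgebra.single_mul_single]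
    simp
  rw [e]
  have := dvd_neg.mpr h
  rw [neg_sub] at this
  exact this.mul_left _

lemma exists_of_mu_eq_zero (f : AddMonoidAlgebra R (ℤ × ℤ)) (hf : muLaurent R f = 0) :
    ∃ g, s R * g = f := by
  suffices h : s R ∣ f by
    obtain ⟨g, hg⟩ := h
    exact ⟨g, hg.symm⟩
  have key : (f.coeff.sum fun p c => AddMonoidAlgebra.single ((p.1 + p.2 : ℤ), (0:ℤ)) c) = 0 := by
    have h1 : (f.coeff.sum fun p c => AddMonoidAlgebra.single ((p.1 + p.2 : ℤ), (0:ℤ)) c)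
        = AddMonoidAlgebra.mapDomain (fun p : ℤ × ℤ => ((p.1 + p.2 : ℤ), (0:ℤ))) f := by
        rw [AddMonoidAlgebra.mapDomain, Finsupp.mapDomain, AddMonoidAlgebra.ofCoeff_finsuppSum]; rfl
    have h2 : (fun p : ℤ × ℤ => ((p.1 + p.2 : ℤ), (0:ℤ)))
        = (fun k : ℤ => (k, (0:ℤ))) ∘ (fun p : ℤ × ℤ => p.1 + p.2) := rfl
    have h3 : ∀ x : AddMonoidAlgebra R (ℤ × ℤ), AddMonoidAlgebra.mapDomain ((fun k : ℤ => (k, (0:ℤ))) ∘ (fun p : ℤ × ℤ => p.1 + p.2)) x = AddMonoidAlgebra.mapDomain (fun k : ℤ => (k, (0:ℤ))) (AddMonoidAlgebra.mapDomain (fun p : ℤ × ℤ => p.1 + p.2) x) :=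
      fun x => AddMonoidAlgebra.ext Finsupp.mapDomain_comp
    rw [h1, h2, h3, ← mu_eq_mapDomain, hf]
    simp
  have hsplit : f = f.coeff.sum fun p c =>
      AddMonoidAlgebra.single p c - AddMonoidAlgebra.single ((p.1 + p.2 : ℤ), (0:ℤ)) c := by
    rw [Finsupp.sum_sub, key, sub_zero, AddMonoidAlgebra.sum_coeff_single]
  rw [hsplit, Finsupp.sum]
  exact Finset.dvd_sum fun p _ => s_dvd_single R p (f.coeff p)

lemma smul_def (a : AddMonoidAlgebra R (ℤ × ℤ)) (x : LaurentPolynomial R) :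
    a • x = muLaurent R a * x := rfl

/-- `μ′` as an `S′`-linear map. -/
def muLin : AddMonoidAlgebra R (ℤ × ℤ) →ₗ[AddMonoidAlgebra R (ℤ × ℤ)] LaurentPolynomial R where
  toFun := muLaurent R
  map_add' := map_add _
  map_smul' a b := by
    simp only [smul_eq_mul, map_mul, RingHom.id_apply]
    rw [smul_def]

/-- The entries of the Koszul resolution. -/
def Xc : ℕ → ModuleCat (AddMonoidAlgebra R (ℤ × ℤ))
  | 0 => ModuleCat.of _ (AddMonoidAlgebra R (ℤ × ℤ))
  | 1 => ModuleCat.of _ (AddMonoidAlgebra R (ℤ × ℤ))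
  | _ + 2 => ModuleCat.of _ PUnit

/-- The differentials of the Koszul resolution. -/
def dc : ∀ n : ℕ, Xc R (n + 1) ⟶ Xc R n
  | 0 => ModuleCat.ofHom (LinearMap.mulLeft (AddMonoidAlgebra R (ℤ × ℤ)) (s R))
  | _ + 1 => 0

/-- The Koszul complex `0 → S′ → S′`. -/
def K : ChainComplex (ModuleCat (AddMonoidAlgebra R (ℤ × ℤ))) ℕ :=
  ChainComplex.of (Xc R) (dc R) (fun n => by
    show (0 : Xc R (n+2) ⟶ Xc R (n+1)) ≫ _ = 0
    simp)

lemma K_d_1_0 :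
    (K R).d 1 0 = ModuleCat.ofHom (LinearMap.mulLeft (AddMonoidAlgebra R (ℤ × ℤ)) (s R)) :=
  (ChainComplex.of_d (Xc R) (dc R) 0).trans rfl

lemma K_d_succ (n : ℕ) : (K R).d (n + 2) (n + 1) = 0 :=
  (ChainComplex.of_d (Xc R) (dc R) (n + 1)).trans rfl

lemma K_isZero (n : ℕ) : Limits.IsZero ((K R).X (n + 2)) :=
  ModuleCat.isZero_of_subsingleton (ModuleCat.of (AddMonoidAlgebra R (ℤ × ℤ)) PUnit)

instance K_projective (n : ℕ) : Projective ((K R).X n) := by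
  match n with
  | 0 => exact ModuleCat.projective_of_free (Module.Basis.singleton PUnit.{1} (AddMonoidAlgebra R (ℤ × ℤ)))
  | 1 => exact ModuleCat.projective_of_free (Module.Basis.singleton PUnit.{1} (AddMonoidAlgebra R (ℤ × ℤ)))
  | n + 2 => exact (K_isZero R n).projective

lemma comp_eq_zero :
    (ModuleCat.ofHom (LinearMap.mulLeft (AddMonoidAlgebra R (ℤ × ℤ)) (s R)) :
        ModuleCat.of (AddMonoidAlgebra R (ℤ × ℤ)) (AddMonoidAlgebra R (ℤ × ℤ)) ⟶
          ModuleCat.of (AddMonoidAlgebra R (ℤ × ℤ)) (AddMonoidAlgebra R (ℤ × ℤ))) ≫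
      (ModuleCat.ofHom (muLin R) :
        ModuleCat.of (AddMonoidAlgebra R (ℤ × ℤ)) (AddMonoidAlgebra R (ℤ × ℤ)) ⟶ laurentAsS'Mod R)
        = 0 := by
  apply ModuleCat.hom_ext
  show (muLin R).comp (LinearMap.mulLeft (AddMonoidAlgebra R (ℤ × ℤ)) (s R)) = 0
  apply LinearMap.ext
  intro a
  show muLaurent R (s R * a) = 0
  rw [map_mul, mu_s, zero_mul]

lemma mulLeft_mono :
    Mono (ModuleCat.ofHom (LinearMap.mulLeft (AddMonoidAlgebra R (ℤ × ℤ)) (s R)) :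
        ModuleCat.of (AddMonoidAlgebra R (ℤ × ℤ)) (AddMonoidAlgebra R (ℤ × ℤ)) ⟶
          ModuleCat.of (AddMonoidAlgebra R (ℤ × ℤ)) (AddMonoidAlgebra R (ℤ × ℤ))) := by
  rw [ModuleCat.mono_iff_injective]
  show Function.Injective (LinearMap.mulLeft (AddMonoidAlgebra R (ℤ × ℤ)) (s R))
  intro a b hab
  simp only [LinearMap.mulLeft_apply] at hab
  have h1 : s R * a - s R * b = 0 := by
    rw [sub_eq_zero]; exact hab
  rw [← mul_sub] at h1
  exact sub_eq_zero.mp (eq_zero_of_s_mul_eq_zero R _ h1)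

lemma pi_cond :
    (K R).d 1 0 ≫ (ModuleCat.ofHom (muLin R) :
      ModuleCat.of (AddMonoidAlgebra R (ℤ × ℤ)) (AddMonoidAlgebra R (ℤ × ℤ)) ⟶ laurentAsS'Mod R) = 0 := by
  rw [K_d_1_0]
  exact comp_eq_zero R

/-- The augmentation map of the Koszul resolution. -/
def resPi : K R ⟶ (ChainComplex.single₀ _).obj (laurentAsS'Mod R) :=
  (ChainComplex.toSingle₀Equiv (K R) (laurentAsS'Mod R)).symm
    ⟨ModuleCat.ofHom (muLin R), pi_cond R⟩

lemma resPi_f_zero : (resPi R).f 0 = ModuleCat.ofHom (muLin R) :=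
  ChainComplex.toSingle₀Equiv_symm_apply_f_zero _ _

/-- The projective (Koszul) resolution of `R[t,t⁻¹]` over `S′`. -/
def res : ProjectiveResolution (laurentAsS'Mod R) where
  complex := K R
  π := resPi R
  quasiIso := ⟨fun n => by
    cases n with
    | zero =>
      rw [ChainComplex.quasiIsoAt₀_iff,
        ShortComplex.quasiIso_iff_of_zeros' _ (by simp; rfl) (by simp; rfl) (by simp; rfl)]
      constructor
      · rw [ShortComplex.moduleCat_exact_iff]
        intro x hx
        have hx' : muLaurent R (x : AddMonoidAlgebra R (ℤ × ℤ)) = 0 := by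
          have h0 : (resPi R).f 0 x = 0 := hx
          rw [resPi_f_zero] at h0
          exact h0
        obtain ⟨g, hg⟩ := exists_of_mu_eq_zero R x hx'
        refine ⟨g, ?_⟩
        show ((K R).d 1 0) g = x
        rw [K_d_1_0]
        exact hg
      · rw [ModuleCat.epi_iff_surjective]
        intro l
        obtain ⟨a, ha⟩ := mu_surjective R l
        refine ⟨a, ?_⟩
        show (resPi R).f 0 a = l
        rw [resPi_f_zero]
        exact ha
    | succ n =>
      rw [quasiIsoAt_iff_exactAt' _ _ (ChainComplex.exactAt_succ_single_obj _ _)]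
      cases n with
      | zero =>
        rw [HomologicalComplex.exactAt_iff' _ 2 1 0 (by simp) (by simp)]
        rw [ShortComplex.exact_iff_mono _ (K_d_succ R 0)]
        show Mono ((K R).d 1 0)
        rw [K_d_1_0]
        exact mulLeft_mono R
      | succ m =>
        rw [HomologicalComplex.exactAt_iff' _ (m + 3) (m + 2) (m + 1) (by simp) (by simp)]
        exact ShortComplex.exact_of_isZero_X₂ _ (K_isZero R m)⟩

/-- The functor `R[t,t⁻¹] ⊗_{S′} -`. -/
def F : ModuleCat (AddMonoidAlgebra R (ℤ × ℤ)) ⥤ ModuleCat (AddMonoidAlgebra R (ℤ × ℤ)) :=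
  (MonoidalCategory.tensoringLeft (ModuleCat (AddMonoidAlgebra R (ℤ × ℤ)))).obj
    (laurentAsS'Mod R)

instance : (F R).Additive := by
  unfold F
  infer_instance

/-- The tensored complex. -/
def KF : ChainComplex (ModuleCat (AddMonoidAlgebra R (ℤ × ℤ))) ℕ :=
  ((F R).mapHomologicalComplex (ComplexShape.down ℕ)).obj (K R)

lemma mulLeft_lTensor_zero :
    (LinearMap.mulLeft (AddMonoidAlgebra R (ℤ × ℤ)) (s R)).lTensor (LaurentPolynomial R) = 0 := by
  apply TensorProduct.ext'
  intro l a
  rw [LinearMap.lTensor_tmul, LinearMap.zero_apply, LinearMap.mulLeft_apply,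
    ← smul_eq_mul, TensorProduct.tmul_smul, TensorProduct.smul_tmul', smul_def, mu_s, zero_mul,
    TensorProduct.zero_tmul]

lemma KF_map_d10 : (F R).map ((K R).d 1 0) = 0 := by
  rw [K_d_1_0]
  exact ModuleCat.hom_ext (mulLeft_lTensor_zero R)

lemma KF_d_zero (i j : ℕ) : (KF R).d i j = 0 := by
  by_cases h : j + 1 = i
  · subst h
    show (F R).map ((K R).d (j + 1) j) = 0
    cases j with
    | zero => exact KF_map_d10 R
    | succ m => rw [K_d_succ R m]; exact (F R).map_zero _ _
  · exact (KF R).shape i j (by simpa using h)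

lemma KF_X_isZero (n : ℕ) : Limits.IsZero ((KF R).X (n + 2)) :=
  (F R).map_isZero (K_isZero R n)

/-- Since all differentials of the tensored complex vanish, its homology is just its entries. -/
def KFhomologyIso (n : ℕ) : (KF R).homology n ≅ (KF R).X n :=
  (ShortComplex.LeftHomologyData.ofZeros ((KF R).sc n)
    (KF_d_zero R _ _) (KF_d_zero R _ _)).homologyIso

/-- `R[t,t⁻¹] ⊗_{S′} S′ ≅ R[t,t⁻¹]`. -/
def X0iso : (KF R).X 0 ≅ laurentAsS'Mod R :=
  (TensorProduct.rid (AddMonoidAlgebra R (ℤ × ℤ)) (LaurentPolynomial R)).toModuleIso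

/-- `R[t,t⁻¹] ⊗_{S′} S′ ≅ R[t,t⁻¹]`. -/
def X1iso : (KF R).X 1 ≅ laurentAsS'Mod R :=
  (TensorProduct.rid (AddMonoidAlgebra R (ℤ × ℤ)) (LaurentPolynomial R)).toModuleIso

end TorLaurentRingAux

/-- `Tor_0^{S′}(R[t,t⁻¹], R[t,t⁻¹]) ≅ R[t,t⁻¹]` and `Tor_1^{S′}(R[t,t⁻¹], R[t,t⁻¹]) ≅ R[t,t⁻¹]`
as `S′`-modules (with `S′` acting through `μ′`), and `Tor_n^{S′}(R[t,t⁻¹], R[t,t⁻¹]) = 0` for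
all `n ≥ 2`, where `S′` is the monoid algebra of `ℤ × ℤ` over `R` and `R[t,t⁻¹]` is an
`S′`-module via `μ′`. -/
theorem tor_laurent_ring :
    Nonempty ((((Tor (ModuleCat (AddMonoidAlgebra R (ℤ × ℤ))) 0).obj
        (laurentAsS'Mod R)).obj (laurentAsS'Mod R)) ≅ laurentAsS'Mod R) ∧
    Nonempty ((((Tor (ModuleCat (AddMonoidAlgebra R (ℤ × ℤ))) 1).obj
        (laurentAsS'Mod R)).obj (laurentAsS'Mod R)) ≅ laurentAsS'Mod R) ∧
    ∀ n : ℕ, 2 ≤ n →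
      Limits.IsZero (((Tor (ModuleCat (AddMonoidAlgebra R (ℤ × ℤ))) n).obj
        (laurentAsS'Mod R)).obj (laurentAsS'Mod R)) := by
  classical
  have e : ∀ n : ℕ, (((Tor (ModuleCat (AddMonoidAlgebra R (ℤ × ℤ))) n).obj
      (laurentAsS'Mod R)).obj (laurentAsS'Mod R)) ≅ (TorLaurentRingAux.KF R).X n := fun n =>
    ((TorLaurentRingAux.res R).isoLeftDerivedObj (TorLaurentRingAux.F R) n) ≪≫
      TorLaurentRingAux.KFhomologyIso R n
  refine ⟨⟨e 0 ≪≫ TorLaurentRingAux.X0iso R⟩, ⟨e 1 ≪≫ TorLaurentRingAux.X1iso R⟩, fun n hn => ?_⟩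
  obtain ⟨m, rfl⟩ : ∃ m, n = m + 2 := ⟨n - 2, by omega⟩
  exact Limits.IsZero.of_iso (TorLaurentRingAux.KF_X_isZero R m) (e (m + 2))

end
end
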